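/- arXiv:2511.04168 — 9 statements merged into one kernel-verified Lean document; each statement's English description precedes it below -/
import Mathlib

section
/- Let λ, s, n be real numbers, and set t = s/√2, a₁ = −n, a₂ = n + λ. Let x, y, x̄, ȳ be real numbers with x ≠ 0, x̄ ≠ 0, y ≠ 0, y ≠ n, y + λ ≠ 0, ȳ ≠ 0, satisfying x·x̄ = (n − y)/(2y² + 2λy) and ȳ + y = −(2λx̄² − sx̄ − 1)/(2x̄²). Define q = −√2·x·y, p = (n − y)/(√2·x·y), q̄ = −√2·x̄·ȳ, p̄ = (n + 1 − ȳ)/(√2·x̄·ȳ). Then q̄ + q = p − t − a₂/p and p̄ + p = q̄ + t + (a₁ − 1)/q̄. -/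
/-- the change of variables q = −√2 x y, p = (n − y)/(√2 x y), t = s/√2 transforms
the semiclassical Laguerre discrete system into the standard d-P(A₂⁽¹⁾/E₆⁽¹⁾) equation. -/
theorem stmt3 (lam s n t a1 a2 x y xb yb q p qb pb : ℝ)
    (ht : t = s / Real.sqrt 2) (ha1 : a1 = -n) (ha2 : a2 = n + lam)
    (hx : x ≠ 0) (hxb : xb ≠ 0) (hy : y ≠ 0) (hyn : y ≠ n) (hyl : y + lam ≠ 0) (hyb : yb ≠ 0)
    (h1 : x * xb = (n - y) / (2 * y ^ 2 + 2 * lam * y))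
    (h2 : yb + y = -(2 * lam * xb ^ 2 - s * xb - 1) / (2 * xb ^ 2))
    (hq : q = -Real.sqrt 2 * x * y)
    (hp : p = (n - y) / (Real.sqrt 2 * x * y))
    (hqb : qb = -Real.sqrt 2 * xb * yb)
    (hpb : pb = (n + 1 - yb) / (Real.sqrt 2 * xb * yb)) :
    qb + q = p - t - a2 / p ∧ pb + p = qb + t + (a1 - 1) / qb := by
  have hr : Real.sqrt 2 ≠ 0 := by positivity
  have hr2 : Real.sqrt 2 ^ 2 = 2 := Real.sq_sqrt (by norm_num)
  have hden : 2 * y ^ 2 + 2 * lam * y ≠ 0 := by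
    have h : 2 * y ^ 2 + 2 * lam * y = 2 * y * (y + lam) := by ring
    rw [h]; positivity
  have h1' : x * xb * (2 * y ^ 2 + 2 * lam * y) = n - y := by
    rw [h1]; field_simp
  have h2' : (yb + y) * (2 * xb ^ 2) = -(2 * lam * xb ^ 2 - s * xb - 1) := by
    rw [h2]; field_simp
  have hpE : p = Real.sqrt 2 * xb * (y + lam) := by
    rw [hp, div_eq_iff (by positivity : Real.sqrt 2 * x * y ≠ 0)]
    linear_combination -h1' - x * xb * y * (y + lam) * hr2
  constructor
  · rw [hqb, hq, hpE, ht, ha2]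
    field_simp
    linear_combination (-1 : ℝ) * h1' - (y + lam) * h2' +
      (xb * (y + lam) * (-(xb * yb) - x * y) - xb ^ 2 * (y + lam) ^ 2) * hr2
  · rw [hpb, hqb, hpE, ht, ha1]
    field_simp
    linear_combination yb * h2' + (yb * xb ^ 2 * (y + lam + yb)) * hr2
end

section
/- Let λ, s, n be real numbers, and set t = s/√2, a₁ = −n, a₂ = n + λ. Let q, p, q̄, p̄ be real numbers with q ≠ 0, p ≠ 0, q̄ ≠ 0, qp ≠ a₁ and q̄p̄ ≠ a₁ − 1, satisfying q̄ + q = p − t − a₂/p and p̄ + p = q̄ + t + (a₁ − 1)/q̄. Define x = q/(√2·(a₁ − qp)), y = qp − a₁, x̄ = q̄/(√2·((a₁ − 1) − q̄p̄)), ȳ = q̄p̄ − (a₁ − 1). Then x·x̄ = (n − y)/(2y² + 2λy) and ȳ + y = −(2λx̄² − sx̄ − 1)/(2x̄²). -/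
/-- the inverse change of variables x = q/(√2(a₁ − qp)), y = qp − a₁ transforms the
standard d-P(A₂⁽¹⁾/E₆⁽¹⁾) equation into the semiclassical Laguerre discrete system. -/
theorem stmt4 (lam s n t a1 a2 q p qb pb x y xb yb : ℝ)
    (ht : t = s / Real.sqrt 2) (ha1 : a1 = -n) (ha2 : a2 = n + lam)
    (hq : q ≠ 0) (hp : p ≠ 0) (hqb : qb ≠ 0)
    (hqp : q * p ≠ a1) (hqbpb : qb * pb ≠ a1 - 1)
    (h1 : qb + q = p - t - a2 / p)
    (h2 : pb + p = qb + t + (a1 - 1) / qb)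
    (hx : x = q / (Real.sqrt 2 * (a1 - q * p)))
    (hy : y = q * p - a1)
    (hxb : xb = qb / (Real.sqrt 2 * ((a1 - 1) - qb * pb)))
    (hyb : yb = qb * pb - (a1 - 1)) :
    x * xb = (n - y) / (2 * y ^ 2 + 2 * lam * y) ∧
    yb + y = -(2 * lam * xb ^ 2 - s * xb - 1) / (2 * xb ^ 2) := by
  have hs2 : Real.sqrt 2 ^ 2 = 2 := Real.sq_sqrt (by norm_num)
  have hs0 : Real.sqrt 2 ≠ 0 := by positivity
  have hy0 : y ≠ 0 := by rw [hy]; exact sub_ne_zero.mpr hqp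
  have hyb0 : yb ≠ 0 := by rw [hyb]; exact sub_ne_zero.mpr hqbpb
  have hny : a1 - q * p = -y := by rw [hy]; ring
  have hnyb : a1 - 1 - qb * pb = -yb := by rw [hyb]; ring
  have h1' : (qb + q) * p = (p - t) * p - a2 := by
    field_simp at h1; linarith
  have h2' : (pb + p) * qb = (qb + t) * qb + (a1 - 1) := by
    field_simp at h2; linarith
  have hybe : yb = qb * (qb + t - p) := by rw [hyb]; linear_combination h2'
  have hpw : p * (qb + t - p) = -(q * p + a2) := by linear_combination h1'
  have hybp : yb * p = -qb * (q * p + a2) := by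
    rw [hybe]; linear_combination qb * hpw
  have hypl : y + lam = q * p + a2 := by rw [hy, ha1, ha2]; ring
  have hyn : n - y = -(q * p) := by rw [hy, ha1]; ring
  have hts : t * Real.sqrt 2 = s := by rw [ht]; field_simp
  have hxbv : xb = -qb / (Real.sqrt 2 * yb) := by
    rw [hxb, hnyb, mul_neg, div_neg, neg_div]
  have hxv : x = -q / (Real.sqrt 2 * y) := by
    rw [hx, hny, mul_neg, div_neg, neg_div]
  have hxb0 : xb ≠ 0 := by
    rw [hxbv]
    exact div_ne_zero (neg_ne_zero.mpr hqb) (mul_ne_zero hs0 hyb0)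
  have hx2 : xb * (Real.sqrt 2 * yb) = -qb := by
    rw [hxbv]; field_simp
  have h3 : (yb + y) * qb ^ 2 = -lam * qb ^ 2 - t * yb * qb + yb ^ 2 := by
    linear_combination (qb * p - yb) * hybe + qb ^ 2 * hpw + qb ^ 2 * hypl
  have hden : 2 * y ^ 2 + 2 * lam * y ≠ 0 := by
    have he : 2 * y ^ 2 + 2 * lam * y = 2 * y * (q * p + a2) := by
      rw [hy, ha1, ha2]; ring
    have hu : q * p + a2 ≠ 0 := by
      intro h
      apply hyb0
      have h0 : yb * p = 0 := by rw [hybp, h]; ring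
      exact (mul_eq_zero.mp h0).resolve_right hp
    rw [he]
    exact mul_ne_zero (mul_ne_zero two_ne_zero hy0) hu
  constructor
  · have hxxv : x * xb = q * qb / (2 * (y * yb)) := by
      rw [hxv, hxbv, div_mul_div_comm]
      rw [show -q * -qb = q * qb by ring]
      congr 1
      linear_combination y * yb * hs2
    rw [hxxv, div_eq_div_iff (mul_ne_zero two_ne_zero (mul_ne_zero hy0 hyb0)) hden]
    apply mul_right_cancel₀ hp
    linear_combination (2 * y * p * q * qb) * hypl - (2 * y * yb * p) * hyn +
      (2 * y * q * p) * hybp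
  · have h2xb : (2:ℝ) * xb ^ 2 ≠ 0 := mul_ne_zero two_ne_zero (pow_ne_zero 2 hxb0)
    rw [eq_div_iff h2xb]
    apply mul_right_cancel₀ (mul_ne_zero two_ne_zero (pow_ne_zero 2 hyb0) :
      (2:ℝ) * yb ^ 2 ≠ 0)
    linear_combination 2 * h3 +
      ((2 * (yb + y) + 2 * lam) * (Real.sqrt 2 * xb * yb - qb) - 2 * t * yb) * hx2 -
      ((2 * (yb + y) + 2 * lam) * xb ^ 2 * yb ^ 2) * hs2 + (2 * xb * yb ^ 2) * hts
end

section
/- Define birational maps on tuples (a₀, a₁, a₂; t; q, p) of real numbers by: w₂(a₀,a₁,a₂;t;q,p) = (a₀+a₂, a₁+a₂, −a₂; t; q + a₂/p, p); w₀(a₀,a₁,a₂;t;q,p) = (−a₀, a₁+a₀, a₂+a₀; t; q − a₀/(q−p+t), p − a₀/(q−p+t)); σ₂(a₀,a₁,a₂;t;q,p) = (−a₂, −a₁, −a₀; t; q, q − p + t); σ₁(a₀,a₁,a₂;t;q,p) = (−a₀, −a₂, −a₁; t; −p, −q). Then for all real a₀, a₁, a₂, t, q, p with a₀ + a₁ +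 a₂ = 1, p ≠ 0 and q + a₂/p − p + t ≠ 0, the composition σ₁ ∘ σ₂ ∘ w₀ ∘ w₂ maps (a₀, a₁, a₂; t; q, p) to (a₀, a₁ − 1, a₂ + 1; t; q̄, p̄), where q̄ = p − t − a₂/p − q and p̄ = q̄ + t + (a₁ − 1)/q̄ − p. -/
/-- The birational action of w₂ on (a₀, a₁, a₂; t; q, p). -/
noncomputable def w2Map : ℝ × ℝ × ℝ × ℝ × ℝ × ℝ → ℝ × ℝ × ℝ × ℝ × ℝ × ℝ :=
  fun (a0, a1, a2, t, q, p) => (a0 + a2, a1 + a2, -a2, t, q + a2 / p, p)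

/-- The birational action of w₀ on (a₀, a₁, a₂; t; q, p). -/
noncomputable def w0Map : ℝ × ℝ × ℝ × ℝ × ℝ × ℝ → ℝ × ℝ × ℝ × ℝ × ℝ × ℝ :=
  fun (a0, a1, a2, t, q, p) =>
    (-a0, a1 + a0, a2 + a0, t, q - a0 / (q - p + t), p - a0 / (q - p + t))

/-- The birational action of σ₂ on (a₀, a₁, a₂; t; q, p). -/
def sigma2Map : ℝ × ℝ × ℝ × ℝ × ℝ × ℝ → ℝ × ℝ × ℝ × ℝ × ℝ × ℝ :=
  fun (a0, a1, a2, t, q, p) => (-a2, -a1, -a0, t, q, q - p + t)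

/-- The birational action of σ₁ on (a₀, a₁, a₂; t; q, p). -/
def sigma1Map : ℝ × ℝ × ℝ × ℝ × ℝ × ℝ → ℝ × ℝ × ℝ × ℝ × ℝ × ℝ :=
  fun (a0, a1, a2, t, q, p) => (-a0, -a2, -a1, t, -p, -q)

/-- the composition σ₁ ∘ σ₂ ∘ w₀ ∘ w₂ realizes the translation generating the
standard discrete Painlevé equation of d-P(A₂⁽¹⁾/E₆⁽¹⁾) type. -/
theorem stmt7 (a0 a1 a2 t q p : ℝ)
    (hnorm : a0 + a1 + a2 = 1) (hp : p ≠ 0) (hden : q + a2 / p - p + t ≠ 0) :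
    sigma1Map (sigma2Map (w0Map (w2Map (a0, a1, a2, t, q, p)))) =
      (a0, a1 - 1, a2 + 1, t, p - t - a2 / p - q,
        (p - t - a2 / p - q) + t + (a1 - 1) / (p - t - a2 / p - q) - p) := by
  have hden' : p - t - a2 / p - q ≠ 0 := by
    intro h; apply hden; linarith
  have hDp : q * p + a2 - p * p + t * p ≠ 0 := by
    intro h; apply hden
    field_simp
    linarith
  simp only [w2Map, w0Map, sigma2Map, sigma1Map, Prod.mk.injEq]
  refine ⟨by linarith, by linarith, by linarith, trivial, ?_, ?_⟩
  · field_simp [hDp]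
    ring
  · have ha0 : a0 = 1 - a1 - a2 := by linarith
    subst ha0
    rw [show p - t - a2 / p - q = -(q + a2 / p - p + t) by ring, div_neg]
    ring
end

section
/- Let Pic be the free ℤ-module of rank 10 with basis H_x, H_y, F₁, …, F₈, equipped with the symmetric bilinear form • determined by H_x•H_x = H_y•H_y = 0, H_x•H_y = 1, H_x•F_i = H_y•F_i = 0, and F_i•F_j = −δ_ij. Define δ₀ = F₇−F₈, δ₁ = H_x−F₂−F₃, δ₂ = H_y−F₄−F₅, δ₃ = F₅−F₆, δ₄ = F₄−F₅, δ₅ = H_x−F₁−F₄, δ₆ = F₆−F₇. Then: (i) the 7×7 matrix (δ_i•δ_j)_{i,j=0..6} equals the matrix with rows (−2,0,0,0,0,0,1), (0,−2,1,0,0,0,0), (0,1,−2,1,0,0,0), (0,0,1,−2,1,0,1), (0,0,0,1,−2,1,0), (0,0,0,0,1,−2,0), (1,0,0,1,0,0,−2) (the generalized Cartan matrix of affine type E₆⁽¹⁾); (ii) δ₀ + δ₁ + 2δ₂ + 3δ₃ + 2δ₄ + δ₅ + 2δ₆ = 2H_x + 2H_y − F₁ − F₂ − F₃ − F₄ − F₅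 − F₆ − F₇ − F₈. -/
/-- The Picard lattice: the free ℤ-module of rank 10. -/
abbrev Pic : Type := Fin 10 → ℤ

/-- The intersection form on the Picard lattice. -/
def ip (v w : Pic) : ℤ :=
  v 0 * w 1 + v 1 * w 0 - v 2 * w 2 - v 3 * w 3 - v 4 * w 4 - v 5 * w 5
    - v 6 * w 6 - v 7 * w 7 - v 8 * w 8 - v 9 * w 9

def Hx : Pic := Pi.single 0 1
def Hy : Pic := Pi.single 1 1
def F1 : Pic := Pi.single 2 1
def F2 : Pic := Pi.single 3 1
def F3 : Pic := Pi.single 4 1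
def F4 : Pic := Pi.single 5 1
def F5 : Pic := Pi.single 6 1
def F6 : Pic := Pi.single 7 1
def F7 : Pic := Pi.single 8 1
def F8 : Pic := Pi.single 9 1

/-- The surface root basis for the semiclassical Laguerre weight recurrence. -/
def sd : Fin 7 → Pic
  | 0 => F7 - F8
  | 1 => Hx - F2 - F3
  | 2 => Hy - F4 - F5
  | 3 => F5 - F6
  | 4 => F4 - F5
  | 5 => Hx - F1 - F4
  | 6 => F6 - F7

/-- the Gram matrix of the δᵢ is the generalized Cartan matrix of affine type
E₆⁽¹⁾, and the δᵢ decompose the anticanonical class with multiplicities (1,1,2,3,2,1,2). -/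
theorem stmt11 :
    (∀ i j : Fin 7, ip (sd i) (sd j) =
      !![-2, 0, 0, 0, 0, 0, 1;
          0, -2, 1, 0, 0, 0, 0;
          0, 1, -2, 1, 0, 0, 0;
          0, 0, 1, -2, 1, 0, 1;
          0, 0, 0, 1, -2, 1, 0;
          0, 0, 0, 0, 1, -2, 0;
          1, 0, 0, 1, 0, 0, -2] i j) ∧
    sd 0 + sd 1 + (2 : ℤ) • sd 2 + (3 : ℤ) • sd 3 + (2 : ℤ) • sd 4 + sd 5 + (2 : ℤ) • sd 6 =
      (2 : ℤ) • Hx + (2 : ℤ) • Hy - F1 - F2 - F3 - F4 - F5 - F6 - F7 - F8 := by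
  refine ⟨by intro i j; fin_cases i <;> fin_cases j <;> decide, ?_⟩
  funext k
  fin_cases k <;>
    simp only [sd, Hx, Hy, F1, F2, F3, F4, F5, F6, F7, F8, Pi.add_apply, Pi.sub_apply,
      Pi.smul_apply, Pi.single_apply, smul_eq_mul] <;> decide
end

section
/- Let Pic be the free ℤ-module of rank 10 with basis H_x, H_y, F₁, …, F₈, equipped with the symmetric bilinear form • determined by H_x•H_x = H_y•H_y = 0, H_x•H_y = 1, H_x•F_i = H_y•F_i = 0, and F_i•F_j = −δ_ij. Let ψ: Pic → Pic be the ℤ-linear map determined on the basis by: H_x ↦ 4H_x+2H_y−F₂−F₃−2F₄−2F₅−2F₆−F₇−F₈; H_y ↦ 2H_x+H_y−F₄−F₅−F₆−F₇; F₁ ↦ 2H_x+H_y−F₄−F₅−F₆−F₇−F₈; F₂ ↦ 2H_x+H_y−F₃−F₄−F₅−F₆−F₇; F₃ ↦ 2H_x+H_y−F₂−F₄−F₅−F₆−F₇; F₄ ↦ H_x+H_y−F₄−F₅−F₆; F₅ ↦ H_x−F₆; F₆ ↦ H_x−F₅; F₇ ↦ H_x−F₄; F₈ ↦ F₁. Then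 ψ preserves the intersection form, i.e. ψ(C₁)•ψ(C₂) = C₁•C₂ for all C₁, C₂ ∈ Pic, and ψ fixes the anticanonical class: ψ(2H_x + 2H_y − F₁ − ⋯ − F₈) = 2H_x + 2H_y − F₁ − ⋯ − F₈. -/
set_option maxHeartbeats 1000000 in
/-- the induced action ψ of the composed forward mapping on the Picard lattice
preserves the intersection form and fixes the anticanonical class. -/
theorem stmt13 (ψ : Pic →ₗ[ℤ] Pic)
    (hHx : ψ Hx = (4 : ℤ) • Hx + (2 : ℤ) • Hy - F2 - F3 - (2 : ℤ) • F4 - (2 : ℤ) • F5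
      - (2 : ℤ) • F6 - F7 - F8)
    (hHy : ψ Hy = (2 : ℤ) • Hx + Hy - F4 - F5 - F6 - F7)
    (hF1 : ψ F1 = (2 : ℤ) • Hx + Hy - F4 - F5 - F6 - F7 - F8)
    (hF2 : ψ F2 = (2 : ℤ) • Hx + Hy - F3 - F4 - F5 - F6 - F7)
    (hF3 : ψ F3 = (2 : ℤ) • Hx + Hy - F2 - F4 - F5 - F6 - F7)
    (hF4 : ψ F4 = Hx + Hy - F4 - F5 - F6)
    (hF5 : ψ F5 = Hx - F6)
    (hF6 : ψ F6 = Hx - F5)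
    (hF7 : ψ F7 = Hx - F4)
    (hF8 : ψ F8 = F1) :
    (∀ C1 C2 : Pic, ip (ψ C1) (ψ C2) = ip C1 C2) ∧
    ψ ((2 : ℤ) • Hx + (2 : ℤ) • Hy - F1 - F2 - F3 - F4 - F5 - F6 - F7 - F8) =
      (2 : ℤ) • Hx + (2 : ℤ) • Hy - F1 - F2 - F3 - F4 - F5 - F6 - F7 - F8 := by
  have hdec : ∀ v : Pic, v = v 0 • Hx + v 1 • Hy + v 2 • F1 + v 3 • F2 + v 4 • F3
      + v 5 • F4 + v 6 • F5 + v 7 • F6 + v 8 • F7 + v 9 • F8 := by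
    intro v; funext i; fin_cases i <;>
      simp [Hx, Hy, F1, F2, F3, F4, F5, F6, F7, F8, Pi.single_apply]
  have hpsi : ∀ v : Pic, ψ v = v 0 • ψ Hx + v 1 • ψ Hy + v 2 • ψ F1 + v 3 • ψ F2
      + v 4 • ψ F3 + v 5 • ψ F4 + v 6 • ψ F5 + v 7 • ψ F6 + v 8 • ψ F7 + v 9 • ψ F8 := by
    intro v
    conv_lhs => rw [hdec v]
    simp only [map_add, map_smul]
  have h0 : ∀ v : Pic, ψ v 0 = (4 : ℤ) * v 0 + (2 : ℤ) * v 1 + (2 : ℤ) * v 2 + (2 : ℤ) * v 3 + (2 : ℤ) * v 4 + (1 : ℤ) * v 5 + (1 : ℤ) * v 6 + (1 : ℤ) * v 7 + (1 : ℤ) * v 8 := by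
    intro v
    have h := congrFun (hpsi v) 0
    rw [hHx, hHy, hF1, hF2, hF3, hF4, hF5, hF6, hF7, hF8] at h
    simp [Pi.add_apply, Pi.sub_apply, Pi.smul_apply, smul_eq_mul,
      Hx, Hy, F1, F2, F3, F4, F5, F6, F7, F8, Pi.single_apply] at h
    rw [h]; ring
  have h1 : ∀ v : Pic, ψ v 1 = (2 : ℤ) * v 0 + (1 : ℤ) * v 1 + (1 : ℤ) * v 2 + (1 : ℤ) * v 3 + (1 : ℤ) * v 4 + (1 : ℤ) * v 5 := by
    intro v
    have h := congrFun (hpsi v) 1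
    rw [hHx, hHy, hF1, hF2, hF3, hF4, hF5, hF6, hF7, hF8] at h
    simp [Pi.add_apply, Pi.sub_apply, Pi.smul_apply, smul_eq_mul,
      Hx, Hy, F1, F2, F3, F4, F5, F6, F7, F8, Pi.single_apply] at h
    rw [h]; ring
  have h2 : ∀ v : Pic, ψ v 2 = (1 : ℤ) * v 9 := by
    intro v
    have h := congrFun (hpsi v) 2
    rw [hHx, hHy, hF1, hF2, hF3, hF4, hF5, hF6, hF7, hF8] at h
    simp [Pi.add_apply, Pi.sub_apply, Pi.smul_apply, smul_eq_mul,
      Hx, Hy, F1, F2, F3, F4, F5, F6, F7, F8, Pi.single_apply] at h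
    rw [h]; ring
  have h3 : ∀ v : Pic, ψ v 3 = (-1 : ℤ) * v 0 + (-1 : ℤ) * v 4 := by
    intro v
    have h := congrFun (hpsi v) 3
    rw [hHx, hHy, hF1, hF2, hF3, hF4, hF5, hF6, hF7, hF8] at h
    simp [Pi.add_apply, Pi.sub_apply, Pi.smul_apply, smul_eq_mul,
      Hx, Hy, F1, F2, F3, F4, F5, F6, F7, F8, Pi.single_apply] at h
    rw [h]; ring
  have h4 : ∀ v : Pic, ψ v 4 = (-1 : ℤ) * v 0 + (-1 : ℤ) * v 3 := by
    intro v
    have h := congrFun (hpsi v) 4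
    rw [hHx, hHy, hF1, hF2, hF3, hF4, hF5, hF6, hF7, hF8] at h
    simp [Pi.add_apply, Pi.sub_apply, Pi.smul_apply, smul_eq_mul,
      Hx, Hy, F1, F2, F3, F4, F5, F6, F7, F8, Pi.single_apply] at h
    rw [h]; ring
  have h5 : ∀ v : Pic, ψ v 5 = (-2 : ℤ) * v 0 + (-1 : ℤ) * v 1 + (-1 : ℤ) * v 2 + (-1 : ℤ) * v 3 + (-1 : ℤ) * v 4 + (-1 : ℤ) * v 5 + (-1 : ℤ) * v 8 := by
    intro v
    have h := congrFun (hpsi v) 5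
    rw [hHx, hHy, hF1, hF2, hF3, hF4, hF5, hF6, hF7, hF8] at h
    simp [Pi.add_apply, Pi.sub_apply, Pi.smul_apply, smul_eq_mul,
      Hx, Hy, F1, F2, F3, F4, F5, F6, F7, F8, Pi.single_apply] at h
    rw [h]; ring
  have h6 : ∀ v : Pic, ψ v 6 = (-2 : ℤ) * v 0 + (-1 : ℤ) * v 1 + (-1 : ℤ) * v 2 + (-1 : ℤ) * v 3 + (-1 : ℤ) * v 4 + (-1 : ℤ) * v 5 + (-1 : ℤ) * v 7 := by
    intro v
    have h := congrFun (hpsi v) 6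
    rw [hHx, hHy, hF1, hF2, hF3, hF4, hF5, hF6, hF7, hF8] at h
    simp [Pi.add_apply, Pi.sub_apply, Pi.smul_apply, smul_eq_mul,
      Hx, Hy, F1, F2, F3, F4, F5, F6, F7, F8, Pi.single_apply] at h
    rw [h]; ring
  have h7 : ∀ v : Pic, ψ v 7 = (-2 : ℤ) * v 0 + (-1 : ℤ) * v 1 + (-1 : ℤ) * v 2 + (-1 : ℤ) * v 3 + (-1 : ℤ) * v 4 + (-1 : ℤ) * v 5 + (-1 : ℤ) * v 6 := by
    intro v
    have h := congrFun (hpsi v) 7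
    rw [hHx, hHy, hF1, hF2, hF3, hF4, hF5, hF6, hF7, hF8] at h
    simp [Pi.add_apply, Pi.sub_apply, Pi.smul_apply, smul_eq_mul,
      Hx, Hy, F1, F2, F3, F4, F5, F6, F7, F8, Pi.single_apply] at h
    rw [h]; ring
  have h8 : ∀ v : Pic, ψ v 8 = (-1 : ℤ) * v 0 + (-1 : ℤ) * v 1 + (-1 : ℤ) * v 2 + (-1 : ℤ) * v 3 + (-1 : ℤ) * v 4 := by
    intro v
    have h := congrFun (hpsi v) 8
    rw [hHx, hHy, hF1, hF2, hF3, hF4, hF5, hF6, hF7, hF8] at h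
    simp [Pi.add_apply, Pi.sub_apply, Pi.smul_apply, smul_eq_mul,
      Hx, Hy, F1, F2, F3, F4, F5, F6, F7, F8, Pi.single_apply] at h
    rw [h]; ring
  have h9 : ∀ v : Pic, ψ v 9 = (-1 : ℤ) * v 0 + (-1 : ℤ) * v 2 := by
    intro v
    have h := congrFun (hpsi v) 9
    rw [hHx, hHy, hF1, hF2, hF3, hF4, hF5, hF6, hF7, hF8] at h
    simp [Pi.add_apply, Pi.sub_apply, Pi.smul_apply, smul_eq_mul,
      Hx, Hy, F1, F2, F3, F4, F5, F6, F7, F8, Pi.single_apply] at h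
    rw [h]; ring
  constructor
  · intro C1 C2
    simp only [ip, h0, h1, h2, h3, h4, h5, h6, h7, h8, h9]
    ring
  · have e : ψ ((2 : ℤ) • Hx + (2 : ℤ) • Hy - F1 - F2 - F3 - F4 - F5 - F6 - F7 - F8) =
        (2 : ℤ) • ψ Hx + (2 : ℤ) • ψ Hy - ψ F1 - ψ F2 - ψ F3 - ψ F4 - ψ F5 - ψ F6 - ψ F7 - ψ F8 := by
      simp only [map_sub, map_add, map_smul]
    rw [e, hHx, hHy, hF1, hF2, hF3, hF4, hF5, hF6, hF7, hF8]
    module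
end

section
/- Let Pic be the free ℤ-module of rank 10 with basis H_x, H_y, F₁, …, F₈, and let ψ: Pic → Pic be the ℤ-linear map determined on the basis by: H_x ↦ 4H_x+2H_y−F₂−F₃−2F₄−2F₅−2F₆−F₇−F₈; H_y ↦ 2H_x+H_y−F₄−F₅−F₆−F₇; F₁ ↦ 2H_x+H_y−F₄−F₅−F₆−F₇−F₈; F₂ ↦ 2H_x+H_y−F₃−F₄−F₅−F₆−F₇; F₃ ↦ 2H_x+H_y−F₂−F₄−F₅−F₆−F₇; F₄ ↦ H_x+H_y−F₄−F₅−F₆; F₅ ↦ H_x−F₆; F₆ ↦ H_x−F₅; F₇ ↦ H_x−F₄; F₈ ↦ F₁. Define α₀ = 2H_x+H_y−F₃−F₄−F₅−F₆−F₇−F₈, α₁ = H_y−F₁−F₃, α₂ = F₃−F₂, and δ = 2H_x + 2H_y − F₁ − ⋯ − F₈. Then ψ(α₀) = α₀ + δ, ψ(α₁) = α₁ − δ, and ψ(α₂) = α₂. -/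
/-- The (preliminary) symmetry root basis for the semiclassical Laguerre weight recurrence. -/
def sa : Fin 3 → Pic
  | 0 => (2 : ℤ) • Hx + Hy - F3 - F4 - F5 - F6 - F7 - F8
  | 1 => Hy - F1 - F3
  | 2 => F3 - F2

/-- The anticanonical class δ = −K. -/
def antiK : Pic := (2 : ℤ) • Hx + (2 : ℤ) • Hy - F1 - F2 - F3 - F4 - F5 - F6 - F7 - F8

/-- ψ acts on the symmetry root lattice as the translation
α ↦ α + ⟨1, −1, 0⟩δ. -/
theorem stmt14 (ψ : Pic →ₗ[ℤ] Pic)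
    (hHx : ψ Hx = (4 : ℤ) • Hx + (2 : ℤ) • Hy - F2 - F3 - (2 : ℤ) • F4 - (2 : ℤ) • F5
      - (2 : ℤ) • F6 - F7 - F8)
    (hHy : ψ Hy = (2 : ℤ) • Hx + Hy - F4 - F5 - F6 - F7)
    (hF1 : ψ F1 = (2 : ℤ) • Hx + Hy - F4 - F5 - F6 - F7 - F8)
    (hF2 : ψ F2 = (2 : ℤ) • Hx + Hy - F3 - F4 - F5 - F6 - F7)
    (hF3 : ψ F3 = (2 : ℤ) • Hx + Hy - F2 - F4 - F5 - F6 - F7)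
    (hF4 : ψ F4 = Hx + Hy - F4 - F5 - F6)
    (hF5 : ψ F5 = Hx - F6)
    (hF6 : ψ F6 = Hx - F5)
    (hF7 : ψ F7 = Hx - F4)
    (hF8 : ψ F8 = F1) :
    ψ (sa 0) = sa 0 + antiK ∧ ψ (sa 1) = sa 1 - antiK ∧ ψ (sa 2) = sa 2 := by
  refine ⟨?_, ?_, ?_⟩ <;>
  · simp only [sa, antiK, map_add, map_sub, map_smul, hHx, hHy, hF1, hF2, hF3, hF4, hF5,
      hF6, hF7, hF8]
    module
end

section
/- Let Pic be the free ℤ-module of rank 10 with basis written either as H_q, H_p, E₁, …, E₈ or as H_x, H_y, F₁, …, F₈, equipped with the symmetric bilinear form • determined by H•H = 0 for each of the two H-generators, H_q•H_p = 1 (resp. H_x•H_y = 1), H•E_i = 0 and E_i•E_j = −δ_ij. Let T: Pic → Pic be the ℤ-linear map determined by T(H_q) = H_x+H_y−F₃−F₄, T(H_p) = H_x, T(E₁) = H_x−F₃, T(E₂) = F₂, T(E₃) = H_x−F₄, T(E₄) = F₁, T(E_i) = F_i for i = 5,6,7,8, and let S: Pic → Pic be determined by S(H_x) = H_p, S(H_y)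 = H_q+H_p−E₁−E₃, S(F₁) = E₄, S(F₂) = E₂, S(F₃) = H_p−E₁, S(F₄) = H_p−E₃, S(F_i) = E_i for i = 5,6,7,8. Then: (i) S ∘ T and T ∘ S are the identity on Pic; (ii) T preserves the intersection form; (iii) T maps the standard surface roots (E₇−E₈, E₁−E₂, H_q−E₁−E₅, E₅−E₆, H_p−E₃−E₅, E₃−E₄, E₆−E₇) respectively to (F₇−F₈, H_x−F₂−F₃, H_y−F₄−F₅, F₅−F₆, F₄−F₅, H_x−F₁−F₄, F₆−F₇). -/
def Hq : Pic := Pi.single 0 1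
def Hp : Pic := Pi.single 1 1
def E1 : Pic := Pi.single 2 1
def E2 : Pic := Pi.single 3 1
def E3 : Pic := Pi.single 4 1
def E4 : Pic := Pi.single 5 1
def E5 : Pic := Pi.single 6 1
def E6 : Pic := Pi.single 7 1
def E7 : Pic := Pi.single 8 1
def E8 : Pic := Pi.single 9 1

private lemma pic_decompE (v : Pic) :
    v = v 0 • Hq + v 1 • Hp + v 2 • E1 + v 3 • E2 + v 4 • E3 + v 5 • E4
      + v 6 • E5 + v 7 • E6 + v 8 • E7 + v 9 • E8 := by
  funext j
  fin_cases j <;>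
    simp [Hq, Hp, E1, E2, E3, E4, E5, E6, E7, E8, Pi.single_apply]

private lemma pic_decompF (v : Pic) :
    v = v 0 • Hx + v 1 • Hy + v 2 • F1 + v 3 • F2 + v 4 • F3 + v 5 • F4
      + v 6 • F5 + v 7 • F6 + v 8 • F7 + v 9 • F8 := by
  funext j
  fin_cases j <;>
    simp [Hx, Hy, F1, F2, F3, F4, F5, F6, F7, F8, Pi.single_apply]

/-- the preliminary change of basis T of the Picard lattice is invertible
(with inverse S), preserves the intersection form, and identifies the standard E₆⁽¹⁾ surface
root basis with the one for the semiclassical Laguerre weight recurrence. -/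
theorem stmt15 (T S : Pic →ₗ[ℤ] Pic)
    (hTHq : T Hq = Hx + Hy - F3 - F4) (hTHp : T Hp = Hx)
    (hTE1 : T E1 = Hx - F3) (hTE2 : T E2 = F2)
    (hTE3 : T E3 = Hx - F4) (hTE4 : T E4 = F1)
    (hTE5 : T E5 = F5) (hTE6 : T E6 = F6) (hTE7 : T E7 = F7) (hTE8 : T E8 = F8)
    (hSHx : S Hx = Hp) (hSHy : S Hy = Hq + Hp - E1 - E3)
    (hSF1 : S F1 = E4) (hSF2 : S F2 = E2)
    (hSF3 : S F3 = Hp - E1) (hSF4 : S F4 = Hp - E3)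
    (hSF5 : S F5 = E5) (hSF6 : S F6 = E6) (hSF7 : S F7 = E7) (hSF8 : S F8 = E8) :
    S.comp T = LinearMap.id ∧ T.comp S = LinearMap.id ∧
    (∀ C1 C2 : Pic, ip (T C1) (T C2) = ip C1 C2) ∧
    T (E7 - E8) = F7 - F8 ∧
    T (E1 - E2) = Hx - F2 - F3 ∧
    T (Hq - E1 - E5) = Hy - F4 - F5 ∧
    T (E5 - E6) = F5 - F6 ∧
    T (Hp - E3 - E5) = F4 - F5 ∧
    T (E3 - E4) = Hx - F1 - F4 ∧
    T (E6 - E7) = F6 - F7 := by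

  have hTv : ∀ v : Pic, T v = v 0 • (Hx + Hy - F3 - F4) + v 1 • Hx + v 2 • (Hx - F3)
      + v 3 • F2 + v 4 • (Hx - F4) + v 5 • F1 + v 6 • F5 + v 7 • F6 + v 8 • F7 + v 9 • F8 := by
    intro v
    conv_lhs => rw [pic_decompE v]
    simp only [map_add, map_smul, hTHq, hTHp, hTE1, hTE2, hTE3, hTE4, hTE5, hTE6, hTE7, hTE8]
  have hSv : ∀ v : Pic, S v = v 0 • Hp + v 1 • (Hq + Hp - E1 - E3) + v 2 • E4 + v 3 • E2
      + v 4 • (Hp - E1) + v 5 • (Hp - E3) + v 6 • E5 + v 7 • E6 + v 8 • E7 + v 9 • E8 := by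
    intro v
    conv_lhs => rw [pic_decompF v]
    simp only [map_add, map_smul, hSHx, hSHy, hSF1, hSF2, hSF3, hSF4, hSF5, hSF6, hSF7, hSF8]
  refine ⟨?_, ?_, ?_, ?_, ?_, ?_, ?_, ?_, ?_, ?_⟩
  · refine LinearMap.ext fun v => ?_
    simp only [LinearMap.comp_apply, LinearMap.id_apply]
    rw [hTv v]
    simp only [map_add, map_smul, map_sub, hSHx, hSHy, hSF1, hSF2, hSF3, hSF4, hSF5, hSF6,
      hSF7, hSF8]
    conv_rhs => rw [pic_decompE v]
    module
  · refine LinearMap.ext fun v => ?_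
    simp only [LinearMap.comp_apply, LinearMap.id_apply]
    rw [hSv v]
    simp only [map_add, map_smul, map_sub, hTHq, hTHp, hTE1, hTE2, hTE3, hTE4, hTE5, hTE6,
      hTE7, hTE8]
    conv_rhs => rw [pic_decompF v]
    module
  · intro C1 C2
    rw [hTv C1, hTv C2]
    simp [ip, Hx, Hy, F1, F2, F3, F4, F5, F6, F7, F8, Pi.single_apply]
    ring
  · rw [map_sub, hTE7, hTE8]
  · rw [map_sub, hTE1, hTE2]; abel
  · rw [map_sub, map_sub, hTHq, hTE1, hTE5]; abel
  · rw [map_sub, hTE5, hTE6]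
  · rw [map_sub, map_sub, hTHp, hTE3, hTE5]; abel
  · rw [map_sub, hTE3, hTE4]; abel
  · rw [map_sub, hTE6, hTE7]
end

section
/- Let Pic be the free ℤ-module of rank 10 with basis written either as H_q, H_p, E₁, …, E₈ or as H_x, H_y, F₁, …, F₈, equipped with the symmetric bilinear form • determined by H•H = 0 for each of the two H-generators, H_q•H_p = 1 (resp. H_x•H_y = 1), H•E_i = 0 and E_i•E_j = −δ_ij. Let T': Pic → Pic be the ℤ-linear map determined by T'(H_q) = H_x+H_y−F₃−F₄, T'(H_p) = H_x+H_y−F₁−F₃, T'(E₁) = H_x−F₃, T'(E₂) = F₂, T'(E₃) = H_x+H_y−F₁−F₃−F₄, T'(E₄) = H_y−F₃, T'(E_i) = F_i for i = 5,6,7,8, and let S': Pic → Pic be determined by S'(H_x) = H_q+H_p−E₃−E₄, S'(H_y) = H_q+H_p−E₁−E₃, S'(F₁) = H_q−E₃, S'(F₂) = E₂, S'(F₃) = H_q+H_p−E₁−E₃−E₄, S'(F₄) = H_p−E₃, S'(F_i) = E_i for i = 5,6,7,8. Then: (i) S' ∘ T' and T' ∘ S' are the identity on Pic; (ii) T' preserves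 the intersection form; (iii) T' maps the standard surface roots (E₇−E₈, E₁−E₂, H_q−E₁−E₅, E₅−E₆, H_p−E₃−E₅, E₃−E₄, E₆−E₇) respectively to (F₇−F₈, H_x−F₂−F₃, H_y−F₄−F₅, F₅−F₆, F₄−F₅, H_x−F₁−F₄, F₆−F₇); (iv) T' maps the standard symmetry roots α₀ = H_q+H_p−E₅−E₆−E₇−E₈, α₁ = H_q−E₃−E₄, α₂ = H_p−E₁−E₂ respectively to 2H_x+2H_y−F₁−2F₃−F₄−F₅−F₆−F₇−F₈, −H_y+F₁+F₃, and H_y−F₁−F₂. -/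
set_option maxHeartbeats 1000000 in
/-- the final change of basis T' of the Picard lattice is invertible (with
inverse S'), preserves the intersection form, identifies the standard E₆⁽¹⁾ surface root
bases, and maps the standard A₂⁽¹⁾ symmetry roots to the final symmetry root basis for the
semiclassical Laguerre weight recurrence. -/
theorem stmt17 (T' S' : Pic →ₗ[ℤ] Pic)
    (hTHq : T' Hq = Hx + Hy - F3 - F4) (hTHp : T' Hp = Hx + Hy - F1 - F3)
    (hTE1 : T' E1 = Hx - F3) (hTE2 : T' E2 = F2)
    (hTE3 : T' E3 = Hx + Hy - F1 - F3 - F4) (hTE4 : T' E4 = Hy - F3)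
    (hTE5 : T' E5 = F5) (hTE6 : T' E6 = F6) (hTE7 : T' E7 = F7) (hTE8 : T' E8 = F8)
    (hSHx : S' Hx = Hq + Hp - E3 - E4) (hSHy : S' Hy = Hq + Hp - E1 - E3)
    (hSF1 : S' F1 = Hq - E3) (hSF2 : S' F2 = E2)
    (hSF3 : S' F3 = Hq + Hp - E1 - E3 - E4) (hSF4 : S' F4 = Hp - E3)
    (hSF5 : S' F5 = E5) (hSF6 : S' F6 = E6) (hSF7 : S' F7 = E7) (hSF8 : S' F8 = E8) :
    S'.comp T' = LinearMap.id ∧ T'.comp S' = LinearMap.id ∧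
    (∀ C1 C2 : Pic, ip (T' C1) (T' C2) = ip C1 C2) ∧
    T' (E7 - E8) = F7 - F8 ∧
    T' (E1 - E2) = Hx - F2 - F3 ∧
    T' (Hq - E1 - E5) = Hy - F4 - F5 ∧
    T' (E5 - E6) = F5 - F6 ∧
    T' (Hp - E3 - E5) = F4 - F5 ∧
    T' (E3 - E4) = Hx - F1 - F4 ∧
    T' (E6 - E7) = F6 - F7 ∧
    T' (Hq + Hp - E5 - E6 - E7 - E8) =
      (2 : ℤ) • Hx + (2 : ℤ) • Hy - F1 - (2 : ℤ) • F3 - F4 - F5 - F6 - F7 - F8 ∧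
    T' (Hq - E3 - E4) = -Hy + F1 + F3 ∧
    T' (Hp - E1 - E2) = Hy - F1 - F2 := by
  have hrepr : ∀ v : Pic, v = v 0 • Hq + v 1 • Hp + v 2 • E1 + v 3 • E2 + v 4 • E3
      + v 5 • E4 + v 6 • E5 + v 7 • E6 + v 8 • E7 + v 9 • E8 := by
    intro v
    funext j
    fin_cases j <;>
      simp [Hq, Hp, E1, E2, E3, E4, E5, E6, E7, E8, Pi.single_apply]
  have hreprF : ∀ v : Pic, v = v 0 • Hx + v 1 • Hy + v 2 • F1 + v 3 • F2 + v 4 • F3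
      + v 5 • F4 + v 6 • F5 + v 7 • F6 + v 8 • F7 + v 9 • F8 := hrepr
  have hT : ∀ v : Pic, T' v = (v 0 + v 1 + v 2 + v 4) • Hx + (v 0 + v 1 + v 4 + v 5) • Hy
      + (-v 1 - v 4) • F1 + v 3 • F2 + (-v 0 - v 1 - v 2 - v 4 - v 5) • F3
      + (-v 0 - v 4) • F4 + v 6 • F5 + v 7 • F6 + v 8 • F7 + v 9 • F8 := by
    intro v
    conv_lhs => rw [hrepr v]
    simp only [map_add, map_smul, hTHq, hTHp, hTE1, hTE2, hTE3, hTE4, hTE5, hTE6, hTE7, hTE8]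
    module
  have hT0 : ∀ v : Pic, T' v 0 = v 0 + v 1 + v 2 + v 4 := by
    intro v; rw [hT v]
    simp [Hx, Hy, F1, F2, F3, F4, F5, F6, F7, F8, Pi.single_apply]
  have hT1 : ∀ v : Pic, T' v 1 = v 0 + v 1 + v 4 + v 5 := by
    intro v; rw [hT v]
    simp [Hx, Hy, F1, F2, F3, F4, F5, F6, F7, F8, Pi.single_apply]
  have hT2 : ∀ v : Pic, T' v 2 = -v 1 - v 4 := by
    intro v; rw [hT v]
    simp [Hx, Hy, F1, F2, F3, F4, F5, F6, F7, F8, Pi.single_apply]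
  have hT3 : ∀ v : Pic, T' v 3 = v 3 := by
    intro v; rw [hT v]
    simp [Hx, Hy, F1, F2, F3, F4, F5, F6, F7, F8, Pi.single_apply]
  have hT4 : ∀ v : Pic, T' v 4 = -v 0 - v 1 - v 2 - v 4 - v 5 := by
    intro v; rw [hT v]
    simp [Hx, Hy, F1, F2, F3, F4, F5, F6, F7, F8, Pi.single_apply]
  have hT5 : ∀ v : Pic, T' v 5 = -v 0 - v 4 := by
    intro v; rw [hT v]
    simp [Hx, Hy, F1, F2, F3, F4, F5, F6, F7, F8, Pi.single_apply]
  have hT6 : ∀ v : Pic, T' v 6 = v 6 := by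
    intro v; rw [hT v]
    simp [Hx, Hy, F1, F2, F3, F4, F5, F6, F7, F8, Pi.single_apply]
  have hT7 : ∀ v : Pic, T' v 7 = v 7 := by
    intro v; rw [hT v]
    simp [Hx, Hy, F1, F2, F3, F4, F5, F6, F7, F8, Pi.single_apply]
  have hT8 : ∀ v : Pic, T' v 8 = v 8 := by
    intro v; rw [hT v]
    simp [Hx, Hy, F1, F2, F3, F4, F5, F6, F7, F8, Pi.single_apply]
  have hT9 : ∀ v : Pic, T' v 9 = v 9 := by
    intro v; rw [hT v]
    simp [Hx, Hy, F1, F2, F3, F4, F5, F6, F7, F8, Pi.single_apply]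
  refine ⟨?_, ?_, ?_, ?_, ?_, ?_, ?_, ?_, ?_, ?_, ?_, ?_, ?_⟩
  · refine LinearMap.ext fun v => ?_
    simp only [LinearMap.comp_apply, LinearMap.id_apply]
    rw [hT v]
    simp only [map_add, map_smul, hSHx, hSHy, hSF1, hSF2, hSF3, hSF4, hSF5, hSF6, hSF7, hSF8]
    conv_rhs => rw [hrepr v]
    module
  · refine LinearMap.ext fun v => ?_
    simp only [LinearMap.comp_apply, LinearMap.id_apply]
    conv_lhs => rw [hreprF v]
    simp only [map_add, map_smul, hSHx, hSHy, hSF1, hSF2, hSF3, hSF4, hSF5, hSF6, hSF7, hSF8,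
      map_sub, hTHq, hTHp, hTE1, hTE2, hTE3, hTE4, hTE5, hTE6, hTE7, hTE8]
    conv_rhs => rw [hreprF v]
    module
  · intro C1 C2
    simp only [ip, hT0, hT1, hT2, hT3, hT4, hT5, hT6, hT7, hT8, hT9]
    ring
  all_goals
    simp only [map_sub, map_add, map_smul, hTHq, hTHp, hTE1, hTE2, hTE3, hTE4, hTE5,
      hTE6, hTE7, hTE8]
  all_goals module
end

section
/- Let L = ℤ³ with basis α₀, α₁, α₂ and set δ = α₀ + α₁ + α₂. Define ℤ-linear maps on L by: W₁(α₀) = α₀ + α₁, W₁(α₁) = −α₁, W₁(α₂) = α₂ + α₁; Φ(α₀) = α₀, Φ(α₁) = α₁ + δ, Φ(α₂) = α₂ − δ; Ψ(α₀) = α₀ + δ, Ψ(α₁) = α₁ − δ, Ψ(α₂) = α₂. Then W₁ ∘ W₁ is the identity, and W₁ ∘ Φ ∘ W₁ = Ψ. -/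
/-- The A₂⁽¹⁾ root lattice: the free ℤ-module of rank 3 with basis α₀, α₁, α₂. -/
abbrev RootLat : Type := Fin 3 → ℤ

/-- The basis vectors α₀, α₁, α₂. -/
def al (i : Fin 3) : RootLat := Pi.single i 1

/-- The null root δ = α₀ + α₁ + α₂. -/
def dlt : RootLat := al 0 + al 1 + al 2

/-- W₁ is an involution and conjugates the translation Φ (for the standard
discrete Painlevé equation) into the translation Ψ (for the semiclassical Laguerre
recurrence): W₁ ∘ Φ ∘ W₁ = Ψ. -/
theorem stmt18 (W1 Φ Ψ : RootLat →ₗ[ℤ] RootLat)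
    (hW0 : W1 (al 0) = al 0 + al 1)
    (hW1 : W1 (al 1) = -al 1)
    (hW2 : W1 (al 2) = al 2 + al 1)
    (hP0 : Φ (al 0) = al 0)
    (hP1 : Φ (al 1) = al 1 + dlt)
    (hP2 : Φ (al 2) = al 2 - dlt)
    (hQ0 : Ψ (al 0) = al 0 + dlt)
    (hQ1 : Ψ (al 1) = al 1 - dlt)
    (hQ2 : Ψ (al 2) = al 2) :
    W1.comp W1 = LinearMap.id ∧ W1.comp (Φ.comp W1) = Ψ := by
  have hb : ∀ i : Fin 3, Pi.basisFun ℤ (Fin 3) i = al i := by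
    intro i; simp [al, Pi.basisFun_apply]
  constructor
  · apply (Pi.basisFun ℤ (Fin 3)).ext
    intro i
    rw [hb]
    simp only [LinearMap.comp_apply, LinearMap.id_apply]
    fin_cases i
    · rw [show (al ⟨0, by omega⟩ : RootLat) = al 0 from rfl, hW0, map_add, hW0, hW1]; abel
    · rw [show (al ⟨1, by omega⟩ : RootLat) = al 1 from rfl, hW1, map_neg, hW1]; abel
    · rw [show (al ⟨2, by omega⟩ : RootLat) = al 2 from rfl, hW2, map_add, hW2, hW1]; abel
  · apply (Pi.basisFun ℤ (Fin 3)).ext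
    intro i
    rw [hb]
    simp only [LinearMap.comp_apply]
    fin_cases i
    · rw [show (al ⟨0, by omega⟩ : RootLat) = al 0 from rfl, hW0, map_add, hP0, hP1,
        map_add, map_add, hW0, hW1, dlt, map_add, map_add, hW0, hW1, hW2, hQ0, dlt]; abel
    · rw [show (al ⟨1, by omega⟩ : RootLat) = al 1 from rfl, hW1, map_neg, hP1, map_neg,
        map_add, hW1, dlt, map_add, map_add, hW0, hW1, hW2, hQ1, dlt]; abel
    · rw [show (al ⟨2, by omega⟩ : RootLat) = al 2 from rfl]
      simp only [dlt, map_add, map_sub, map_neg, hW0, hW1, hW2, hP0, hP1, hP2, hQ2]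
      abel
end
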